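/- Let m ≥ 1, let x̄ ∈ Q and ȳ ∈ N_Q(x̄), and let K̄ := T_Q(x̄) ∩ {ȳ}^⊥ be the critical cone. Define d²(v) ∈ (−∞,+∞] for v = (v₀,v_r) ∈ ℝ × ℝ^m by: d²(v) = 0 if x̄ ∈ int(Q) ∪ {0} and v ∈ K̄; d²(v) = (‖ȳ‖/‖x̄‖)(‖v_r‖² − v₀²) if x̄ ∈ bd(Q)\{0} and v ∈ K̄; and d²(v) = +∞ if v ∉ K̄. Then the indicator function δ_Q is twice epi-differentiable at x̄ for ȳ with second-order epi-derivative d², i.e.: (a) for every sequence t_k ↓ 0 and every sequence v_k → v one has liminf_{k→∞} Δ_{t_k}²δ_Q(x̄|ȳ)(v_k) ≥ d²(v), and (b) for every sequence t_k ↓ 0 there exists a sequence v_k → v with limsup_{k→∞} Δ_{t_k}²δ_Q(x̄|ȳ)(v_k) ≤ d²(v). -/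

import Mathlib

open scoped RealInnerProductSpace Pointwise
open Filter Topology Metric Set Classical

noncomputable section

abbrev Em (m : ℕ) := WithLp 2 (ℝ × EuclideanSpace ℝ (Fin m))

namespace SOC

def mk2 {α β : Type*} (a : α) (b : β) : WithLp 2 (α × β) := (WithLp.equiv 2 (α × β)).symm (a, b)

def Q (m : ℕ) : Set (Em m) := {s | ‖s.ofLp.2‖ ≤ s.ofLp.1}

variable {H : Type*} [NormedAddCommGroup H] [InnerProductSpace ℝ H]

def normalCone (C : Set H) (x : H) : Set H :=
  {y | x ∈ C ∧ ∀ z ∈ C, ⟪y, z - x⟫ ≤ 0}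

def tangentCone (Ω : Set H) (z : H) : Set H :=
  {w | ∃ t : ℕ → ℝ, ∃ wk : ℕ → H, (∀ k, 0 < t k) ∧ Tendsto t atTop (𝓝 0) ∧
    Tendsto wk atTop (𝓝 w) ∧ ∀ k, z + t k • wk k ∈ Ω}

def regularNormalCone (Ω : Set H) (z : H) : Set H :=
  {v | z ∈ Ω ∧ ∀ ε > 0, ∀ᶠ w in 𝓝[Ω \ {z}] z, ⟪v, w - z⟫ ≤ ε * ‖w - z‖}

def limitingNormalCone (Ω : Set H) (z : H) : Set H :=
  {v | ∃ zk : ℕ → H, ∃ vk : ℕ → H, (∀ k, vk k ∈ regularNormalCone Ω (zk k)) ∧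
    Tendsto zk atTop (𝓝 z) ∧ Tendsto vk atTop (𝓝 v)}

variable {n m : ℕ}

/-- The constraint set `Γ = {x | Φ(x) ∈ Q}`. -/
def Gamma (Φ : EuclideanSpace ℝ (Fin n) → Em m) : Set (EuclideanSpace ℝ (Fin n)) :=
  {x | Φ x ∈ Q m}

/-- Metric subregularity constraint qualification with modulus `κ`. -/
def MSCQmod (Φ : EuclideanSpace ℝ (Fin n) → Em m) (xb : EuclideanSpace ℝ (Fin n)) (κ : ℝ) : Prop :=
  ∃ U ∈ 𝓝 xb, ∀ x ∈ U, infDist x (Gamma Φ) ≤ κ * infDist (Φ x) (Q m)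

def MSCQ (Φ : EuclideanSpace ℝ (Fin n) → Em m) (xb : EuclideanSpace ℝ (Fin n)) : Prop :=
  ∃ κ > 0, MSCQmod Φ xb κ

/-- Lagrange multiplier set `Λ(x,x*)`. -/
def Lambda (Φ : EuclideanSpace ℝ (Fin n) → Em m) (x xs : EuclideanSpace ℝ (Fin n)) : Set (Em m) :=
  {lam | lam ∈ normalCone (Q m) (Φ x) ∧ ContinuousLinearMap.adjoint (fderiv ℝ Φ x) lam = xs}

/-- Critical cone `K(x,x*) = T_Γ(x) ∩ {x*}^⊥`. -/
def Kcone (Φ : EuclideanSpace ℝ (Fin n) → Em m) (x xs : EuclideanSpace ℝ (Fin n)) :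
    Set (EuclideanSpace ℝ (Fin n)) :=
  tangentCone (Gamma Φ) x ∩ {v | ⟪xs, v⟫ = 0}

/-- `x ↦ Φ̂(x) = (−Φ₀(x), Φ_r(x))`. -/
def hatFun (Φ : EuclideanSpace ℝ (Fin n) → Em m) (x : EuclideanSpace ℝ (Fin n)) : Em m :=
  mk2 (-(Φ x).ofLp.1) (Φ x).ofLp.2

/-- Hessian of `x ↦ ⟨λ, Φ(x)⟩` at `x`, as a linear map (derivative of the gradient). -/
def hessLam (Φ : EuclideanSpace ℝ (Fin n) → Em m) (x : EuclideanSpace ℝ (Fin n)) (lam : Em m) :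
    EuclideanSpace ℝ (Fin n) →L[ℝ] EuclideanSpace ℝ (Fin n) :=
  fderiv ℝ (fun y => ContinuousLinearMap.adjoint (fderiv ℝ Φ y) lam) x

/-- The curvature term `H(x;λ)`. -/

def Hmap (Φ : EuclideanSpace ℝ (Fin n) → Em m) (x : EuclideanSpace ℝ (Fin n)) (lam : Em m) :
    EuclideanSpace ℝ (Fin n) →L[ℝ] EuclideanSpace ℝ (Fin n) :=
  if Φ x ∈ frontier (Q m) \ {0} then
    (-(lam.ofLp.1 / (Φ x).ofLp.1)) •
      ((ContinuousLinearMap.adjoint (fderiv ℝ (hatFun Φ) x)).comp (fderiv ℝ Φ x))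
  else 0

/-- `∇²⟨λ,Φ⟩(x) + H(x;λ)`. -/
def Gmap (Φ : EuclideanSpace ℝ (Fin n) → Em m) (x : EuclideanSpace ℝ (Fin n)) (lam : Em m) :
    EuclideanSpace ℝ (Fin n) →L[ℝ] EuclideanSpace ℝ (Fin n) :=
  hessLam Φ x lam + Hmap Φ x lam

/-- `Λ(x,x*;v)`: minimizers of `λ ↦ −⟨v, (∇²⟨λ,Φ⟩(x)+H(x;λ))v⟩` over `Λ(x,x*)`. -/
def LambdaV (Φ : EuclideanSpace ℝ (Fin n) → Em m) (x xs v : EuclideanSpace ℝ (Fin n)) :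
    Set (Em m) :=
  {lam ∈ Lambda Φ x xs | ∀ mu ∈ Lambda Φ x xs,
    -⟪v, Gmap Φ x lam v⟫ ≤ -⟪v, Gmap Φ x mu v⟫}

/-- Graph of the limiting normal cone mapping `N_Γ`, inside `ℝ^n × ℝ^n` with the ℓ² norm. -/
def gphNGamma (Φ : EuclideanSpace ℝ (Fin n) → Em m) :
    Set (WithLp 2 (EuclideanSpace ℝ (Fin n) × EuclideanSpace ℝ (Fin n))) :=
  {p | p.ofLp.2 ∈ limitingNormalCone (Gamma Φ) p.ofLp.1}

/-- Second derivative `D²Φ(x)[v,v]`. -/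
def D2 (Φ : EuclideanSpace ℝ (Fin n) → Em m) (x v : EuclideanSpace ℝ (Fin n)) : Em m :=
  fderiv ℝ (fderiv ℝ Φ) x v v

end SOC

namespace SOC

/-- Indicator function of a set, with values in `(-∞, +∞]` (i.e. `EReal`). -/
def indE {m : ℕ} (C : Set (Em m)) (x : Em m) : EReal := if x ∈ C then 0 else ⊤

/-- Second-order difference quotient
`Δ_t² δ_Q(x̄|ȳ)(v) = [δ_Q(x̄ + t v) − δ_Q(x̄) − t⟨ȳ,v⟩] / (t²/2)`
(written as multiplication by `2/t²`, which agrees with division for `t > 0`). -/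
def sodq {m : ℕ} (xb yb : Em m) (t : ℝ) (v : Em m) : EReal :=
  ((2 / t ^ 2 : ℝ) : EReal) *
    (indE (Q m) (xb + t • v) - indE (Q m) xb - ((t * ⟪yb, v⟫ : ℝ) : EReal))

end SOC

namespace SOC
section Helpers

lemma le_liminf_of_forall_lt' (D : EReal) (u : ℕ → EReal)
    (h : ∀ c : ℝ, (c : EReal) < D → ∀ᶠ k in atTop, (c : EReal) ≤ u k) :
    D ≤ Filter.liminf u atTop := by
  refine le_of_forall_lt fun c hc => ?_
  obtain ⟨x, hx1, hx2⟩ := EReal.lt_iff_exists_real_btwn.1 hc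
  exact lt_of_lt_of_le hx1 (Filter.le_liminf_of_le (by isBoundedDefault) (h x hx2))

lemma limsup_le_of_forall_gt' (D : EReal) (u : ℕ → EReal)
    (h : ∀ c : ℝ, D < (c : EReal) → ∀ᶠ k in atTop, u k ≤ (c : EReal)) :
    Filter.limsup u atTop ≤ D := by
  refine le_of_forall_gt fun c hc => ?_
  obtain ⟨x, hx1, hx2⟩ := EReal.lt_iff_exists_real_btwn.1 hc
  exact lt_of_le_of_lt (Filter.limsup_le_of_le (by isBoundedDefault) (h x hx1)) hx2

variable {m : ℕ}


lemma mem_Q_iff {s : Em m} : s ∈ Q m ↔ ‖s.ofLp.2‖ ≤ s.ofLp.1 := Iff.rfl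

lemma mk2_fst (a : ℝ) (b : EuclideanSpace ℝ (Fin m)) : (mk2 a b : Em m).ofLp.1 = a := rfl
lemma mk2_snd (a : ℝ) (b : EuclideanSpace ℝ (Fin m)) : (mk2 a b : Em m).ofLp.2 = b := rfl

lemma inner_fs (y w : Em m) : ⟪y, w⟫ = y.ofLp.1 * w.ofLp.1 + ⟪y.ofLp.2, w.ofLp.2⟫ := by
  rw [WithLp.prod_inner_apply, real_inner_comm]; rfl

lemma sodq_of_mem {xb yb : Em m} {t : ℝ} {v : Em m} (ht : 0 < t)
    (hxb : xb ∈ Q m) (h : xb + t • v ∈ Q m) :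
    sodq xb yb t v = (((-2 / t) * ⟪yb, v⟫ : ℝ) : EReal) := by
  rw [sodq]; simp only [indE, if_pos hxb, if_pos h]
  rw [show (0 : EReal) = ((0:ℝ) : EReal) from rfl, ← EReal.coe_sub, ← EReal.coe_sub,
    ← EReal.coe_mul]
  rw [EReal.coe_eq_coe_iff]
  field_simp
  ring

lemma sodq_of_not_mem {xb yb : Em m} {t : ℝ} {v : Em m} (ht : 0 < t)
    (hxb : xb ∈ Q m) (h : xb + t • v ∉ Q m) :
    sodq xb yb t v = ⊤ := by
  rw [sodq]; simp only [indE, if_pos hxb, if_neg h]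
  rw [show (⊤ : EReal) - 0 = ⊤ from by simp, EReal.top_sub_coe]
  exact EReal.coe_mul_top_of_pos (by positivity)


lemma cont_fst : Continuous fun x : Em m => x.ofLp.1 :=
  continuous_fst.comp (WithLp.prod_continuous_ofLp _ _ _)
lemma cont_snd : Continuous fun x : Em m => x.ofLp.2 :=
  continuous_snd.comp (WithLp.prod_continuous_ofLp _ _ _)

lemma feas_key {E : Type*} [NormedAddCommGroup E] [InnerProductSpace ℝ E]
    (a t c v0 : ℝ) (xr vr : E) (hx : ‖xr‖ = a) (ht : 0 < t)
    (hlin : ⟪xr, vr⟫ ≤ a * v0)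
    (hc : ‖vr‖ ^ 2 ≤ 2 * a * c + v0 ^ 2 + 2 * c * t * v0 + c ^ 2 * t ^ 2)
    (hpos : 0 ≤ a + t * v0 + c * t ^ 2) :
    ‖xr + t • vr‖ ≤ a + t * (v0 + t * c) := by
  have hexp : ‖xr + t • vr‖ ^ 2 = a ^ 2 + 2 * t * ⟪xr, vr⟫ + t ^ 2 * ‖vr‖ ^ 2 := by
    rw [@norm_add_sq_real, inner_smul_right, norm_smul]
    simp [hx, mul_pow, abs_of_pos ht]
    ring
  have h1 : ‖xr + t • vr‖ ^ 2 ≤ (a + t * (v0 + t * c)) ^ 2 := by nlinarith [sq_nonneg t, ht.le]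
  nlinarith [norm_nonneg (xr + t • vr), h1, hpos]

lemma mem_Q_of (xb : Em m) (v : Em m) (t c : ℝ) (hfr : ‖xb.ofLp.2‖ = xb.ofLp.1) (ht : 0 < t)
    (hlin : ⟪xb.ofLp.2, v.ofLp.2⟫ ≤ xb.ofLp.1 * v.ofLp.1)
    (hc : ‖v.ofLp.2‖ ^ 2 ≤ 2 * xb.ofLp.1 * c + v.ofLp.1 ^ 2 + 2 * c * t * v.ofLp.1 + c ^ 2 * t ^ 2)
    (hpos : 0 ≤ xb.ofLp.1 + t * v.ofLp.1 + c * t ^ 2) :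
    xb + t • (v + (t * c) • mk2 (1 : ℝ) (0 : EuclideanSpace ℝ (Fin m))) ∈ Q m := by
  show ‖xb.ofLp.2 + t • (v.ofLp.2 + (t * c) • (0 : EuclideanSpace ℝ (Fin m)))‖ ≤
    xb.ofLp.1 + t * (v.ofLp.1 + (t * c) * 1)
  rw [smul_zero, add_zero, mul_one]
  have := feas_key xb.ofLp.1 t c v.ofLp.1 xb.ofLp.2 v.ofLp.2 hfr ht hlin hc hpos
  linarith [this]

lemma normal_char (hm : 1 ≤ m) {xb yb : Em m} (ha : 0 < xb.ofLp.1) (hfr : ‖xb.ofLp.2‖ = xb.ofLp.1)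
    (hyb : yb ∈ normalCone (Q m) xb) :
    yb.ofLp.1 ≤ 0 ∧ yb.ofLp.2 = (-yb.ofLp.1 / xb.ofLp.1) • xb.ofLp.2 ∧ ‖yb.ofLp.2‖ = -yb.ofLp.1 := by
  have h0 : xb ∈ Q m := hyb.1
  have key : ∀ w : EuclideanSpace ℝ (Fin m), yb.ofLp.1 * ‖w‖ + ⟪yb.ofLp.2, w⟫ ≤ ⟪yb, xb⟫ := by
    intro w
    have hz : (mk2 ‖w‖ w : Em m) ∈ Q m := by show ‖w‖ ≤ ‖w‖; exact le_rfl
    have := hyb.2 _ hz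
    have hexp : ⟪yb, mk2 ‖w‖ w - xb⟫ = yb.ofLp.1 * ‖w‖ + ⟪yb.ofLp.2, w⟫ - ⟪yb, xb⟫ := by
      rw [inner_sub_right]
      rw [inner_fs yb (mk2 ‖w‖ w)]; rfl
    linarith [hexp ▸ this]
  have hx0 : (0 : Em m) ∈ Q m := by
    show ‖(0 : Em m).ofLp.2‖ ≤ (0 : Em m).ofLp.1
    simp [show ((0:Em m).ofLp.2) = 0 from rfl, show ((0:Em m).ofLp.1) = (0:ℝ) from rfl]
  have h1 : ⟪yb, xb⟫ = 0 := by
    have e1 := hyb.2 0 hx0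
    rw [zero_sub, inner_neg_right] at e1
    have h2x : (2 : ℝ) • xb ∈ Q m := by
      show ‖((2:ℝ) • xb).ofLp.2‖ ≤ ((2:ℝ) • xb).ofLp.1
      show ‖(2:ℝ) • xb.ofLp.2‖ ≤ 2 * xb.ofLp.1
      rw [norm_smul, hfr]
      norm_num
    have e2 := hyb.2 _ h2x
    have : (2:ℝ) • xb - xb = xb := by
      rw [two_smul]; abel
    rw [this] at e2
    linarith
  -- yb.ofLp.1 ≤ 0
  have hu : ∃ u : EuclideanSpace ℝ (Fin m), ‖u‖ = 1 := by
    refine ⟨EuclideanSpace.single ⟨0, hm⟩ 1, ?_⟩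
    simp [EuclideanSpace.norm_single]
  obtain ⟨u, hu1⟩ := hu
  have ky1 := key u
  have ky2 := key (-u)
  rw [h1] at ky1 ky2
  rw [hu1] at ky1
  rw [norm_neg, hu1, inner_neg_right] at ky2
  have hy1 : yb.ofLp.1 ≤ 0 := by linarith
  -- ‖yb.ofLp.2‖ ≤ -yb.ofLp.1
  have ky3 := key yb.ofLp.2
  rw [h1, real_inner_self_eq_norm_sq] at ky3
  have hy2 : ‖yb.ofLp.2‖ ≤ -yb.ofLp.1 := by
    nlinarith [norm_nonneg yb.ofLp.2]
  -- inner of radial parts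
  have h1' : yb.ofLp.1 * xb.ofLp.1 + ⟪yb.ofLp.2, xb.ofLp.2⟫ = 0 := by rw [← inner_fs]; exact h1
  have hcs : ⟪yb.ofLp.2, xb.ofLp.2⟫ ≤ ‖yb.ofLp.2‖ * ‖xb.ofLp.2‖ := real_inner_le_norm _ _
  have hnorm : ‖yb.ofLp.2‖ = -yb.ofLp.1 := by
    rw [hfr] at hcs
    nlinarith
  have heq : ⟪yb.ofLp.2, xb.ofLp.2⟫ = ‖yb.ofLp.2‖ * ‖xb.ofLp.2‖ := by
    rw [hnorm, hfr]; linarith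
  have hpar := (inner_eq_norm_mul_iff_real).1 heq
  refine ⟨hy1, ?_, hnorm⟩
  -- ‖xb.ofLp.2‖ • yb.ofLp.2 = ‖yb.ofLp.2‖ • xb.ofLp.2
  rw [hfr, hnorm] at hpar
  have : yb.ofLp.2 = (xb.ofLp.1)⁻¹ • ((-yb.ofLp.1) • xb.ofLp.2) := by
    rw [← hpar, smul_smul, inv_mul_cancel₀ (ne_of_gt ha), one_smul]
  rw [this, smul_smul, div_eq_inv_mul]
lemma tangent_subset {xb : Em m} (hfr : ‖xb.ofLp.2‖ = xb.ofLp.1) {v : Em m}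
    (hv : v ∈ tangentCone (Q m) xb) : ⟪xb.ofLp.2, v.ofLp.2⟫ ≤ xb.ofLp.1 * v.ofLp.1 := by
  obtain ⟨t, wk, ht, ht0, hwk, hmem⟩ := hv
  have hw1 : Tendsto (fun k => (wk k).ofLp.1) atTop (𝓝 v.ofLp.1) := (cont_fst.tendsto v).comp hwk
  have hw2 : Tendsto (fun k => (wk k).ofLp.2) atTop (𝓝 v.ofLp.2) := (cont_snd.tendsto v).comp hwk
  have key : ∀ k, 2 * ⟪xb.ofLp.2, (wk k).ofLp.2⟫ + t k * ‖(wk k).ofLp.2‖ ^ 2 ≤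
      2 * xb.ofLp.1 * (wk k).ofLp.1 + t k * (wk k).ofLp.1 ^ 2 := by
    intro k
    have hk := hmem k
    have hk' : ‖xb.ofLp.2 + t k • (wk k).ofLp.2‖ ≤ xb.ofLp.1 + t k * (wk k).ofLp.1 := hk
    have hexp : ‖xb.ofLp.2 + t k • (wk k).ofLp.2‖ ^ 2 =
        xb.ofLp.1 ^ 2 + 2 * (t k) * ⟪xb.ofLp.2, (wk k).ofLp.2⟫ + (t k) ^ 2 * ‖(wk k).ofLp.2‖ ^ 2 := by
      rw [@norm_add_sq_real, inner_smul_right, norm_smul]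
      rw [hfr]
      simp [Real.norm_eq_abs, mul_pow, sq_abs]
      ring
    have hsq : ‖xb.ofLp.2 + t k • (wk k).ofLp.2‖ ^ 2 ≤ (xb.ofLp.1 + t k * (wk k).ofLp.1) ^ 2 := by
      have h0 : (0:ℝ) ≤ ‖xb.ofLp.2 + t k • (wk k).ofLp.2‖ := norm_nonneg _
      nlinarith
    rw [hexp] at hsq
    have htk := ht k
    nlinarith
  have TL : Tendsto (fun k => 2 * ⟪xb.ofLp.2, (wk k).ofLp.2⟫ + t k * ‖(wk k).ofLp.2‖ ^ 2) atTop
      (𝓝 (2 * ⟪xb.ofLp.2, v.ofLp.2⟫ + 0 * ‖v.ofLp.2‖ ^ 2)) := by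
    exact ((tendsto_const_nhds.inner hw2).const_mul 2).add (ht0.mul ((hw2.norm).pow 2))
  have TR : Tendsto (fun k => 2 * xb.ofLp.1 * (wk k).ofLp.1 + t k * (wk k).ofLp.1 ^ 2) atTop
      (𝓝 (2 * xb.ofLp.1 * v.ofLp.1 + 0 * v.ofLp.1 ^ 2)) := by
    exact (hw1.const_mul _).add (ht0.mul (hw1.pow 2))
  have := le_of_tendsto_of_tendsto' TL TR key
  nlinarith [this]

lemma tangent_mem {xb : Em m} (ha : 0 < xb.ofLp.1) (hfr : ‖xb.ofLp.2‖ = xb.ofLp.1) {v : Em m}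
    (hv : ⟪xb.ofLp.2, v.ofLp.2⟫ ≤ xb.ofLp.1 * v.ofLp.1) : v ∈ tangentCone (Q m) xb := by
  set a := xb.ofLp.1 with hadef
  set c := ‖v.ofLp.2‖ ^ 2 / a with hcdef
  set T := a / (2 * (|v.ofLp.1| + 1)) with hTdef
  have hc0 : 0 ≤ c := by positivity
  have hca : c * a = ‖v.ofLp.2‖ ^ 2 := by rw [hcdef]; exact div_mul_cancel₀ _ (ne_of_gt ha)
  have hT0 : 0 < T := by positivity
  have hTa : T * (|v.ofLp.1| + 1) = a / 2 := by rw [hTdef]; field_simp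
  refine ⟨fun k => T / (k + 1), fun k => v + ((T / (k + 1)) * c) • mk2 1 0, ?_, ?_, ?_, ?_⟩
  · intro k; positivity
  · have : Tendsto (fun k : ℕ => T * (1 / (k + 1))) atTop (𝓝 (T * 0)) :=
      tendsto_one_div_add_atTop_nhds_zero_nat.const_mul T
    simpa [div_eq_mul_inv, mul_comm] using this
  · have h1 : Tendsto (fun k : ℕ => T / (k + 1) * c) atTop (𝓝 (0 * c)) := by
      have : Tendsto (fun k : ℕ => T * (1 / (k + 1))) atTop (𝓝 (T * 0)) :=
        tendsto_one_div_add_atTop_nhds_zero_nat.const_mul T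
      simpa [div_eq_mul_inv, mul_comm, mul_assoc] using this.mul_const c
    have h2 : Tendsto (fun k : ℕ => v + (T / (k + 1) * c) • (mk2 1 0 : Em m)) atTop
        (𝓝 (v + (0 * c) • (mk2 1 0 : Em m))) :=
      tendsto_const_nhds.add (h1.smul_const _)
    simpa using h2
  · intro k
    set t := T / (k + 1) with htdef
    have ht : 0 < t := by positivity
    have htT : t ≤ T := by
      rw [htdef]
      apply div_le_self hT0.le
      exact le_add_of_nonneg_left (Nat.cast_nonneg k)
    apply mem_Q_of xb v t c hfr ht hv
    · have h2 : 2 * c * t * v.ofLp.1 ≥ -(c * a) := by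
        have hstep : t * |v.ofLp.1| ≤ T * (|v.ofLp.1| + 1) := by
          nlinarith [abs_nonneg v.ofLp.1, mul_nonneg (sub_nonneg.2 htT) (abs_nonneg v.ofLp.1)]
        have : c * (t * |v.ofLp.1|) ≤ c * (a / 2) := by
          rw [← hTa]; exact mul_le_mul_of_nonneg_left hstep hc0
        have habs : -(c * t * |v.ofLp.1|) ≤ c * t * v.ofLp.1 := by
          nlinarith [neg_abs_le v.ofLp.1, mul_nonneg hc0 ht.le]
        nlinarith
      nlinarith [sq_nonneg v.ofLp.1, sq_nonneg (c * t)]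
    · have h3 : t * |v.ofLp.1| ≤ a / 2 := by nlinarith [abs_nonneg v.ofLp.1]
      have habs : -(t * |v.ofLp.1|) ≤ t * v.ofLp.1 := by nlinarith [neg_abs_le v.ofLp.1]
      nlinarith [mul_nonneg hc0 (sq_nonneg t)]
lemma mem_interior_of_lt {s : Em m} (h : ‖s.ofLp.2‖ < s.ofLp.1) : s ∈ interior (Q m) :=
  interior_maximal (fun z hz => le_of_lt hz) (isOpen_lt cont_snd.norm cont_fst) h

lemma isClosed_Q : IsClosed (Q m) := isClosed_le cont_snd.norm cont_fst

lemma smul_mem_Q_iff {s : Em m} {t : ℝ} (ht : 0 < t) : t • s ∈ Q m ↔ s ∈ Q m := by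
  show ‖(t • s).ofLp.2‖ ≤ (t • s).ofLp.1 ↔ ‖s.ofLp.2‖ ≤ s.ofLp.1
  show ‖t • s.ofLp.2‖ ≤ t * s.ofLp.1 ↔ ‖s.ofLp.2‖ ≤ s.ofLp.1
  rw [norm_smul, Real.norm_eq_abs, abs_of_pos ht]
  exact mul_le_mul_iff_right₀ ht

lemma tendsto_one_div_nat : Tendsto (fun k : ℕ => (1 : ℝ) / (k + 1)) atTop (𝓝 0) :=
  tendsto_one_div_add_atTop_nhds_zero_nat

lemma tangent_zero_subset : tangentCone (Q m) (0 : Em m) ⊆ Q m := by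
  rintro v ⟨t, wk, ht, ht0, hwk, hmem⟩
  refine isClosed_Q.mem_of_tendsto hwk (Filter.Eventually.of_forall fun k => ?_)
  have := hmem k
  rw [zero_add] at this
  exact (smul_mem_Q_iff (ht k)).1 this

lemma Q_subset_tangent_zero : Q m ⊆ tangentCone (Q m) (0 : Em m) := by
  intro v hv
  refine ⟨fun k => 1 / (k + 1), fun _ => v, fun k => by positivity, tendsto_one_div_nat,
    tendsto_const_nhds, fun k => ?_⟩
  rw [zero_add]
  exact (smul_mem_Q_iff (by positivity)).2 hv

lemma yb_eq_zero_of_interior {xb yb : Em m} (hint : xb ∈ interior (Q m))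
    (hyb : yb ∈ normalCone (Q m) xb) : yb = 0 := by
  obtain ⟨ε, hε, hball⟩ := Metric.mem_nhds_iff.1 (mem_interior_iff_mem_nhds.1 hint)
  set s := ε / (2 * (‖yb‖ + 1)) with hs
  have hs0 : 0 < s := by positivity
  have hz : xb + s • yb ∈ Q m := by
    apply hball
    rw [Metric.mem_ball, dist_eq_norm, add_sub_cancel_left, norm_smul, Real.norm_eq_abs,
      abs_of_pos hs0]
    have : s * (‖yb‖ + 1) = ε / 2 := by rw [hs]; field_simp
    nlinarith [norm_nonneg yb]
  have := hyb.2 _ hz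
  rw [add_sub_cancel_left, inner_smul_right, real_inner_self_eq_norm_sq] at this
  have : ‖yb‖ ^ 2 ≤ 0 := by nlinarith
  have : ‖yb‖ = 0 := by nlinarith [norm_nonneg yb, sq_nonneg ‖yb‖]
  exact norm_eq_zero.1 this

lemma tangent_univ_of_interior {xb : Em m} (hint : xb ∈ interior (Q m)) (v : Em m) :
    v ∈ tangentCone (Q m) xb := by
  obtain ⟨ε, hε, hball⟩ := Metric.mem_nhds_iff.1 (mem_interior_iff_mem_nhds.1 hint)
  refine ⟨fun k => ε / (2 * (‖v‖ + 1) * (k + 1)), fun _ => v, fun k => by positivity,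
    ?_, tendsto_const_nhds, fun k => ?_⟩
  · have h1 : Tendsto (fun k : ℕ => (ε / (2 * (‖v‖ + 1))) * (1 / (k + 1))) atTop
        (𝓝 ((ε / (2 * (‖v‖ + 1))) * 0)) := tendsto_one_div_nat.const_mul _
    rw [mul_zero] at h1
    refine h1.congr fun k => ?_
    field_simp
  · apply hball
    rw [Metric.mem_ball, dist_eq_norm, add_sub_cancel_left, norm_smul, Real.norm_eq_abs,
      abs_of_pos (by positivity : (0:ℝ) < ε / (2 * (‖v‖ + 1) * (k + 1)))]
    have h2 : ε / (2 * (‖v‖ + 1) * (k + 1)) ≤ ε / (2 * (‖v‖ + 1)) := by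
      apply div_le_div_of_nonneg_left hε.le (by positivity)
      nlinarith [Nat.cast_nonneg (α := ℝ) k, norm_nonneg v]
    have h3 : (ε / (2 * (‖v‖ + 1))) * (‖v‖ + 1) = ε / 2 := by field_simp
    nlinarith [norm_nonneg v, mul_le_mul_of_nonneg_right h2 (le_trans (norm_nonneg v) (by linarith) : (0:ℝ) ≤ ‖v‖)]

lemma feas_sq {xb : Em m} (hfr : ‖xb.ofLp.2‖ = xb.ofLp.1) {t : ℝ} (ht : 0 < t) {w : Em m}
    (h : xb + t • w ∈ Q m) :
    ⟪xb.ofLp.2, w.ofLp.2⟫ - xb.ofLp.1 * w.ofLp.1 ≤ (t / 2) * (w.ofLp.1 ^ 2 - ‖w.ofLp.2‖ ^ 2) := by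
  have hk' : ‖xb.ofLp.2 + t • w.ofLp.2‖ ≤ xb.ofLp.1 + t * w.ofLp.1 := h
  have hexp : ‖xb.ofLp.2 + t • w.ofLp.2‖ ^ 2 =
      xb.ofLp.1 ^ 2 + 2 * t * ⟪xb.ofLp.2, w.ofLp.2⟫ + t ^ 2 * ‖w.ofLp.2‖ ^ 2 := by
    rw [@norm_add_sq_real, inner_smul_right, norm_smul]
    rw [hfr]
    simp [Real.norm_eq_abs, mul_pow, sq_abs]
    ring
  have hsq : ‖xb.ofLp.2 + t • w.ofLp.2‖ ^ 2 ≤ (xb.ofLp.1 + t * w.ofLp.1) ^ 2 := by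
    nlinarith [norm_nonneg (xb.ofLp.2 + t • w.ofLp.2)]
  rw [hexp] at hsq
  nlinarith

lemma liminf_aux_neg {xb yb : Em m} (hxb : xb ∈ Q m) {t : ℕ → ℝ} (ht : ∀ k, 0 < t k)
    (ht0 : Tendsto t atTop (𝓝 0)) {vk : ℕ → Em m} {v : Em m}
    (hvk : Tendsto vk atTop (𝓝 v)) (hneg : ⟪yb, v⟫ < 0) (M : ℝ) :
    ∀ᶠ k in atTop, (M : EReal) ≤ sodq xb yb (t k) (vk k) := by
  have hiv : Tendsto (fun k => ⟪yb, vk k⟫) atTop (𝓝 ⟪yb, v⟫) := tendsto_const_nhds.inner hvk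
  have hδ : 0 < -⟪yb, v⟫ / (|M| + 1) := div_pos (by linarith) (by positivity)
  filter_upwards [hiv.eventually (eventually_lt_nhds (by linarith : ⟪yb, v⟫ < ⟪yb, v⟫ / 2)),
    ht0.eventually (eventually_lt_nhds hδ)] with k h1 h2
  by_cases hmem : xb + t k • vk k ∈ Q m
  · rw [sodq_of_mem (ht k) hxb hmem]
    refine EReal.coe_le_coe_iff.2 ?_
    have htk := ht k
    rw [show -2 / t k * ⟪yb, vk k⟫ = -2 * ⟪yb, vk k⟫ / t k from by ring, le_div_iff₀ htk]
    have e1 : M * t k ≤ |M| * t k := by nlinarith [le_abs_self M]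
    have e2 : |M| * t k ≤ |M| * (-⟪yb, v⟫ / (|M| + 1)) := by nlinarith [abs_nonneg M]
    have e3 : |M| * (-⟪yb, v⟫ / (|M| + 1)) ≤ -⟪yb, v⟫ := by
      rw [← mul_div_assoc, div_le_iff₀ (by positivity : (0:ℝ) < |M| + 1)]
      nlinarith [abs_nonneg M]
    linarith
  · rw [sodq_of_not_mem (ht k) hxb hmem]; exact le_top

lemma norm_ratio {xb yb : Em m} (ha : 0 < xb.ofLp.1) (hfr : ‖xb.ofLp.2‖ = xb.ofLp.1)
    (hyn : ‖yb.ofLp.2‖ = -yb.ofLp.1) : ‖yb‖ / ‖xb‖ = -yb.ofLp.1 / xb.ofLp.1 := by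
  have hny : ‖yb‖ ^ 2 = 2 * yb.ofLp.1 ^ 2 := by
    rw [WithLp.prod_norm_sq_eq_of_L2, WithLp.fst, WithLp.snd]
    have h2 : ‖yb.ofLp.1‖ ^ 2 = yb.ofLp.1 ^ 2 := by rw [Real.norm_eq_abs, sq_abs]
    rw [h2, hyn]; ring
  have hnx : ‖xb‖ ^ 2 = 2 * xb.ofLp.1 ^ 2 := by
    rw [WithLp.prod_norm_sq_eq_of_L2, WithLp.fst, WithLp.snd]
    have h2 : ‖xb.ofLp.1‖ ^ 2 = xb.ofLp.1 ^ 2 := by rw [Real.norm_eq_abs, sq_abs]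
    rw [h2, hfr]; ring
  have hy1 : 0 ≤ -yb.ofLp.1 := by nlinarith [norm_nonneg yb.ofLp.2, hyn]
  have hxn : 0 < ‖xb‖ := by nlinarith [norm_nonneg xb]
  rw [div_eq_div_iff (ne_of_gt hxn) (ne_of_gt ha)]
  have hs : (‖yb‖ * xb.ofLp.1) ^ 2 = (-yb.ofLp.1 * ‖xb‖) ^ 2 := by
    linear_combination xb.ofLp.1 ^ 2 * hny - yb.ofLp.1 ^ 2 * hnx
  have h1 : 0 ≤ ‖yb‖ * xb.ofLp.1 := mul_nonneg (norm_nonneg _) ha.le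
  have h2 : 0 ≤ -yb.ofLp.1 * ‖xb‖ := mul_nonneg hy1 (norm_nonneg _)
  rw [← Real.sqrt_sq h1, ← Real.sqrt_sq h2, hs]

lemma inner_e (yb : Em m) : ⟪yb, (mk2 1 0 : Em m)⟫ = yb.ofLp.1 := by
  rw [inner_fs, mk2_fst, mk2_snd]
  simp

lemma inner_eq_fst_snd (y w : Em m) : ⟪y, w⟫ = y.ofLp.1 * w.ofLp.1 + ⟪y.ofLp.2, w.ofLp.2⟫ := inner_fs y w

end Helpers
end SOC

set_option maxHeartbeats 2000000 in
open SOC in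
/-- Theorem 3.1: twice epi-differentiability of the indicator function of the
second-order cone, with the explicit second-order epi-derivative `d`. -/
theorem twice_epi_differentiability_of_indicator_of_secondOrderCone
    {m : ℕ} (hm : 1 ≤ m) (xb yb : Em m)
    (hxb : xb ∈ Q m) (hyb : yb ∈ normalCone (Q m) xb)
    (Kbar : Set (Em m)) (hK : Kbar = tangentCone (Q m) xb ∩ {u | ⟪yb, u⟫ = 0})
    (d : Em m → EReal)
    (hd : ∀ v : Em m, d v =
      if v ∈ Kbar then
        (if xb ∈ interior (Q m) ∪ {(0 : Em m)} then (0 : EReal)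
         else (((‖yb‖ / ‖xb‖) * (‖v.ofLp.2‖ ^ 2 - v.ofLp.1 ^ 2) : ℝ) : EReal))
      else (⊤ : EReal)) :
    (∀ v : Em m, ∀ t : ℕ → ℝ, (∀ k, 0 < t k) → Filter.Tendsto t Filter.atTop (nhds 0) →
      ∀ vk : ℕ → Em m, Filter.Tendsto vk Filter.atTop (nhds v) →
        d v ≤ Filter.liminf (fun k => sodq xb yb (t k) (vk k)) Filter.atTop) ∧
    (∀ v : Em m, ∀ t : ℕ → ℝ, (∀ k, 0 < t k) → Filter.Tendsto t Filter.atTop (nhds 0) →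
      ∃ vk : ℕ → Em m, Filter.Tendsto vk Filter.atTop (nhds v) ∧
        Filter.limsup (fun k => sodq xb yb (t k) (vk k)) Filter.atTop ≤ d v) := by
  have hxQ := hxb
  constructor
  · -- liminf part
    intro v t ht ht0 vk hvk
    by_cases hxint : xb ∈ interior (Q m)
    · -- interior case
      have hy0 : yb = 0 := yb_eq_zero_of_interior hxint hyb
      have hvK : v ∈ Kbar := by
        rw [hK]
        exact ⟨tangent_univ_of_interior hxint v, by simp [hy0, inner_zero_left]⟩
      have hdv : d v = 0 := by rw [hd v, if_pos hvK, if_pos (Set.mem_union_left _ hxint)]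
      rw [hdv]
      refine Filter.le_liminf_of_le (by isBoundedDefault) (Filter.Eventually.of_forall fun k => ?_)
      by_cases hmem : xb + t k • vk k ∈ Q m
      · rw [sodq_of_mem (ht k) hxb hmem, hy0]
        simp
      · rw [sodq_of_not_mem (ht k) hxb hmem]; exact le_top
    · by_cases hx0 : xb = 0
      · -- zero case
        subst hx0
        have hfeas0 : ∀ k, (0 : Em m) + t k • vk k ∈ Q m → ⟪yb, vk k⟫ ≤ 0 := by
          intro k h
          rw [zero_add] at h
          have hz := hyb.2 _ h
          rw [sub_zero, inner_smul_right] at hz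
          nlinarith [ht k]
        by_cases hvK : v ∈ Kbar
        · have hdv : d v = 0 := by
            rw [hd v, if_pos hvK,
              if_pos (show (0 : Em m) ∈ interior (Q m) ∪ {(0 : Em m)} from
                Set.mem_union_right _ (Set.mem_singleton _))]
          rw [hdv]
          refine Filter.le_liminf_of_le (by isBoundedDefault)
            (Filter.Eventually.of_forall fun k => ?_)
          by_cases hmem : (0 : Em m) + t k • vk k ∈ Q m
          · rw [sodq_of_mem (ht k) hxb hmem]
            refine EReal.coe_nonneg.2 ?_
            have hs := hfeas0 k hmem
            have hq : -2 / t k * ⟪yb, vk k⟫ = 2 / t k * (-⟪yb, vk k⟫) := by ring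
            rw [hq]
            have htk := ht k
            exact mul_nonneg (by positivity) (by linarith)
          · rw [sodq_of_not_mem (ht k) hxb hmem]; exact le_top
        · have hdv : d v = ⊤ := by rw [hd v, if_neg hvK]
          rw [hdv]
          have hvnot : v ∉ Q m ∨ ⟪yb, v⟫ ≠ 0 := by
            by_contra hcon
            push_neg at hcon
            exact hvK (hK ▸ ⟨Q_subset_tangent_zero hcon.1, hcon.2⟩)
          apply le_liminf_of_forall_lt'
          intro M _
          rcases hvnot with hvQ | hyv
          · have hev : ∀ᶠ k in atTop, vk k ∉ Q m :=
              hvk (isClosed_Q.isOpen_compl.mem_nhds hvQ)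
            filter_upwards [hev] with k hkk
            have hmem : (0 : Em m) + t k • vk k ∉ Q m := fun h =>
              hkk ((smul_mem_Q_iff (ht k)).1 (by rwa [zero_add] at h))
            rw [sodq_of_not_mem (ht k) hxb hmem]; exact le_top
          · rcases lt_or_gt_of_ne hyv with hneg | hpos
            · exact liminf_aux_neg hxb ht ht0 hvk hneg M
            · have hiv : Tendsto (fun k => ⟪yb, vk k⟫) atTop (𝓝 ⟪yb, v⟫) :=
                tendsto_const_nhds.inner hvk
              filter_upwards [hiv.eventually (eventually_gt_nhds hpos)] with k h1
              have hmem : (0 : Em m) + t k • vk k ∉ Q m := fun h =>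
                absurd (hfeas0 k h) (not_le.2 h1)
              rw [sodq_of_not_mem (ht k) hxb hmem]; exact le_top
      · -- boundary case
        have hfr : ‖xb.ofLp.2‖ = xb.ofLp.1 :=
          le_antisymm hxQ (not_lt.1 fun h => hxint (mem_interior_of_lt h))
        have ha : 0 < xb.ofLp.1 := by
          rcases lt_or_eq_of_le (le_trans (norm_nonneg xb.ofLp.2) hxQ) with h | h
          · exact h
          · exfalso
            apply hx0
            have h2 : ‖xb.ofLp.2‖ = 0 := by rw [hfr, ← h]
            exact WithLp.ofLp_injective 2 (Prod.ext h.symm (norm_eq_zero.1 h2))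
        obtain ⟨hy1, hy2, hyn⟩ := normal_char hm ha hfr hyb
        have hid : ∀ w : Em m, ⟪yb, w⟫ = (-yb.ofLp.1 / xb.ofLp.1) * (⟪xb.ofLp.2, w.ofLp.2⟫ - xb.ofLp.1 * w.ofLp.1) := by
          intro w
          rw [inner_eq_fst_snd, hy2, real_inner_smul_left]
          field_simp
          ring
        have hβ : 0 ≤ -yb.ofLp.1 := by nlinarith [norm_nonneg yb.ofLp.2, hyn]
        have hr0 : 0 ≤ -yb.ofLp.1 / xb.ofLp.1 := div_nonneg hβ ha.le
        have hlow : ∀ k, xb + t k • vk k ∈ Q m →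
            (-yb.ofLp.1 / xb.ofLp.1) * (‖(vk k).ofLp.2‖ ^ 2 - (vk k).ofLp.1 ^ 2) ≤ -2 / t k * ⟪yb, vk k⟫ := by
          intro k hmemk
          have hX := feas_sq hfr (ht k) hmemk
          have htk := ht k
          rw [hid]
          rw [show -2 / t k * ((-yb.ofLp.1 / xb.ofLp.1) * (⟪xb.ofLp.2, (vk k).ofLp.2⟫ - xb.ofLp.1 * (vk k).ofLp.1)) =
            -2 * ((-yb.ofLp.1 / xb.ofLp.1) * (⟪xb.ofLp.2, (vk k).ofLp.2⟫ - xb.ofLp.1 * (vk k).ofLp.1)) / t k from by ring,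
            le_div_iff₀ htk]
          nlinarith [mul_le_mul_of_nonneg_left hX hr0]
        by_cases hvK : v ∈ Kbar
        · have hxout : xb ∉ interior (Q m) ∪ {(0 : Em m)} := by
            rintro (h | h)
            · exact hxint h
            · exact hx0 h
          have hdv : d v = (((‖yb‖ / ‖xb‖) * (‖v.ofLp.2‖ ^ 2 - v.ofLp.1 ^ 2) : ℝ) : EReal) := by
            rw [hd v, if_pos hvK, if_neg hxout]
          rw [hdv, norm_ratio ha hfr hyn]
          apply le_liminf_of_forall_lt'
          intro c hc
          have hc' : c < (-yb.ofLp.1 / xb.ofLp.1) * (‖v.ofLp.2‖ ^ 2 - v.ofLp.1 ^ 2) := EReal.coe_lt_coe_iff.1 hc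
          have h2k : Tendsto (fun k => (vk k).ofLp.2) atTop (𝓝 v.ofLp.2) := (cont_snd.tendsto v).comp hvk
          have h1k : Tendsto (fun k => (vk k).ofLp.1) atTop (𝓝 v.ofLp.1) := (cont_fst.tendsto v).comp hvk
          have hg : Tendsto (fun k => (-yb.ofLp.1 / xb.ofLp.1) * (‖(vk k).ofLp.2‖ ^ 2 - (vk k).ofLp.1 ^ 2)) atTop
              (𝓝 ((-yb.ofLp.1 / xb.ofLp.1) * (‖v.ofLp.2‖ ^ 2 - v.ofLp.1 ^ 2))) :=
            ((h2k.norm.pow 2).sub (h1k.pow 2)).const_mul _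
          filter_upwards [hg.eventually (eventually_gt_nhds hc')] with k hk
          by_cases hmem : xb + t k • vk k ∈ Q m
          · rw [sodq_of_mem (ht k) hxb hmem]
            exact EReal.coe_le_coe_iff.2 (le_trans hk.le (hlow k hmem))
          · rw [sodq_of_not_mem (ht k) hxb hmem]; exact le_top
        · have hdv : d v = ⊤ := by rw [hd v, if_neg hvK]
          rw [hdv]
          have hdich : ⟪yb, v⟫ < 0 ∨ xb.ofLp.1 * v.ofLp.1 < ⟪xb.ofLp.2, v.ofLp.2⟫ := by
            have hnot : ¬(v ∈ tangentCone (Q m) xb ∧ ⟪yb, v⟫ = 0) := by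
              rw [hK] at hvK
              exact fun h => hvK ⟨h.1, h.2⟩
            rcases lt_trichotomy (⟪yb, v⟫ : ℝ) 0 with h | h | h
            · exact Or.inl h
            · right
              by_contra hle
              push_neg at hle
              exact hnot ⟨tangent_mem ha hfr hle, h⟩
            · right
              rw [hid v] at h
              by_contra hle
              push_neg at hle
              nlinarith
          apply le_liminf_of_forall_lt'
          intro M _
          rcases hdich with hneg | hinf
          · exact liminf_aux_neg hxb ht ht0 hvk hneg M
          · have h2k : Tendsto (fun k => (vk k).ofLp.2) atTop (𝓝 v.ofLp.2) := (cont_snd.tendsto v).comp hvk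
            have h1k : Tendsto (fun k => (vk k).ofLp.1) atTop (𝓝 v.ofLp.1) := (cont_fst.tendsto v).comp hvk
            have hL : Tendsto (fun k => ⟪xb.ofLp.2, (vk k).ofLp.2⟫ - xb.ofLp.1 * (vk k).ofLp.1 -
                (t k / 2) * ((vk k).ofLp.1 ^ 2 - ‖(vk k).ofLp.2‖ ^ 2)) atTop
                (𝓝 (⟪xb.ofLp.2, v.ofLp.2⟫ - xb.ofLp.1 * v.ofLp.1 - (0 / 2) * (v.ofLp.1 ^ 2 - ‖v.ofLp.2‖ ^ 2))) := by
              exact ((tendsto_const_nhds.inner h2k).sub (h1k.const_mul _)).sub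
                (((ht0.div_const 2)).mul ((h1k.pow 2).sub (h2k.norm.pow 2)))
            have hδpos : (0 : ℝ) < ⟪xb.ofLp.2, v.ofLp.2⟫ - xb.ofLp.1 * v.ofLp.1 - (0 / 2) * (v.ofLp.1 ^ 2 - ‖v.ofLp.2‖ ^ 2) := by
              simp only [zero_div, zero_mul, sub_zero]
              linarith
            filter_upwards [hL.eventually (eventually_gt_nhds hδpos)] with k hk
            have hmem : xb + t k • vk k ∉ Q m := by
              intro h
              have := feas_sq hfr (ht k) h
              linarith
            rw [sodq_of_not_mem (ht k) hxb hmem]; exact le_top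
  · -- limsup part
    intro v t ht ht0
    by_cases hxint : xb ∈ interior (Q m)
    · have hy0 : yb = 0 := yb_eq_zero_of_interior hxint hyb
      have hvK : v ∈ Kbar := by
        rw [hK]
        exact ⟨tangent_univ_of_interior hxint v, by simp [hy0, inner_zero_left]⟩
      have hdv : d v = 0 := by rw [hd v, if_pos hvK, if_pos (Set.mem_union_left _ hxint)]
      refine ⟨fun _ => v, tendsto_const_nhds, ?_⟩
      rw [hdv]
      obtain ⟨ε, hε, hball⟩ := Metric.mem_nhds_iff.1 (mem_interior_iff_mem_nhds.1 hxint)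
      have hev : ∀ᶠ k in atTop, t k < ε / (‖v‖ + 1) :=
        ht0.eventually (eventually_lt_nhds (by positivity))
      refine Filter.limsup_le_of_le (by isBoundedDefault) ?_
      filter_upwards [hev] with k h1
      have hmem : xb + t k • v ∈ Q m := by
        apply hball
        rw [Metric.mem_ball, dist_eq_norm, add_sub_cancel_left, norm_smul, Real.norm_eq_abs,
          abs_of_pos (ht k)]
        have h3 : ε / (‖v‖ + 1) * (‖v‖ + 1) = ε := by field_simp
        nlinarith [norm_nonneg v, ht k]
      rw [sodq_of_mem (ht k) hxb hmem, hy0]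
      simp
    · by_cases hx0 : xb = 0
      · subst hx0
        by_cases hvK : v ∈ Kbar
        · have hvK' := hvK
          rw [hK] at hvK'
          obtain ⟨hvT, hperp⟩ := hvK'
          have hvQ : v ∈ Q m := tangent_zero_subset hvT
          have hdv : d v = 0 := by
            rw [hd v, if_pos hvK,
              if_pos (show (0 : Em m) ∈ interior (Q m) ∪ {(0 : Em m)} from
                Set.mem_union_right _ (Set.mem_singleton _))]
          refine ⟨fun _ => v, tendsto_const_nhds, ?_⟩
          rw [hdv]
          refine Filter.limsup_le_of_le (by isBoundedDefault)
            (Filter.Eventually.of_forall fun k => ?_)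
          have hmem : (0 : Em m) + t k • v ∈ Q m := by
            rw [zero_add]
            exact (smul_mem_Q_iff (ht k)).2 hvQ
          rw [sodq_of_mem (ht k) hxb hmem, hperp]
          simp
        · exact ⟨fun _ => v, tendsto_const_nhds, by rw [hd v, if_neg hvK]; exact le_top⟩
      · -- boundary case
        have hfr : ‖xb.ofLp.2‖ = xb.ofLp.1 :=
          le_antisymm hxQ (not_lt.1 fun h => hxint (mem_interior_of_lt h))
        have ha : 0 < xb.ofLp.1 := by
          rcases lt_or_eq_of_le (le_trans (norm_nonneg xb.ofLp.2) hxQ) with h | h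
          · exact h
          · exfalso
            apply hx0
            have h2 : ‖xb.ofLp.2‖ = 0 := by rw [hfr, ← h]
            exact WithLp.ofLp_injective 2 (Prod.ext h.symm (norm_eq_zero.1 h2))
        obtain ⟨hy1, hy2, hyn⟩ := normal_char hm ha hfr hyb
        have hβ : 0 ≤ -yb.ofLp.1 := by nlinarith [norm_nonneg yb.ofLp.2, hyn]
        by_cases hvK : v ∈ Kbar
        · have hvK' := hvK
          rw [hK] at hvK'
          obtain ⟨hvT, hperp⟩ := hvK'
          have hlin : ⟪xb.ofLp.2, v.ofLp.2⟫ ≤ xb.ofLp.1 * v.ofLp.1 := tangent_subset hfr hvT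
          set c0 := (‖v.ofLp.2‖ ^ 2 - v.ofLp.1 ^ 2) / (2 * xb.ofLp.1) with hc0
          set M := (|c0| + 1) * (|v.ofLp.1| + 1) / xb.ofLp.1 + 1 with hM
          have hM0 : 0 < M := by positivity
          have hM1 : 1 ≤ M := le_add_of_nonneg_left (by positivity)
          clear_value c0 M
          refine ⟨fun k => v + (t k * (c0 + M * t k)) • mk2 1 0, ?_, ?_⟩
          · have h1 : Tendsto (fun k => t k * (c0 + M * t k)) atTop (𝓝 (0 * (c0 + M * 0))) :=
              ht0.mul (tendsto_const_nhds.add (ht0.const_mul M))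
            have h2 := (tendsto_const_nhds (x := v) (f := atTop)).add
              (h1.smul_const (mk2 1 0 : Em m))
            simpa using h2
          · have hxout : xb ∉ interior (Q m) ∪ {(0 : Em m)} := by
              rintro (h | h)
              · exact hxint h
              · exact hx0 h
            have hdv : d v = ((2 * -yb.ofLp.1 * c0 : ℝ) : EReal) := by
              rw [hd v, if_pos hvK, if_neg hxout, norm_ratio ha hfr hyn]
              refine EReal.coe_eq_coe_iff.2 ?_
              rw [hc0]
              field_simp
            rw [hdv]
            apply limsup_le_of_forall_gt'
            intro r hr
            have hr' : 2 * -yb.ofLp.1 * c0 < r := EReal.coe_lt_coe_iff.1 hr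
            have hδ0 : 0 < min (1 / M) (min (xb.ofLp.1 / (4 * (|v.ofLp.1| + 1))) (xb.ofLp.1 / (4 * (|c0| + 1)))) :=
              lt_min (by positivity) (lt_min (by positivity) (by positivity))
            have htend : Tendsto (fun k => 2 * -yb.ofLp.1 * M * t k) atTop (𝓝 (2 * -yb.ofLp.1 * M * 0)) :=
              ht0.const_mul _
            rw [mul_zero] at htend
            filter_upwards [ht0.eventually (eventually_lt_nhds hδ0),
              htend.eventually (eventually_lt_nhds
                (show (0 : ℝ) < r - 2 * -yb.ofLp.1 * c0 by linarith))] with k h1 h2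
            have htk := ht k
            have ht1 : t k ≤ 1 / M := le_trans h1.le (min_le_left _ _)
            have ht2 : t k ≤ xb.ofLp.1 / (4 * (|v.ofLp.1| + 1)) :=
              le_trans h1.le (le_trans (min_le_right _ _) (min_le_left _ _))
            have ht3 : t k ≤ xb.ofLp.1 / (4 * (|c0| + 1)) :=
              le_trans h1.le (le_trans (min_le_right _ _) (min_le_right _ _))
            set c := c0 + M * t k with hc
            clear_value c
            have hMt : M * t k ≤ 1 := by
              have h6 := (le_div_iff₀ hM0).1 ht1
              nlinarith [h6]
            have hcabs : |c| ≤ |c0| + 1 := by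
              calc |c| = |c0 + M * t k| := by rw [hc]
              _ ≤ |c0| + |M * t k| := abs_add_le _ _
              _ ≤ |c0| + 1 := by
                  rw [abs_of_nonneg (by positivity : (0:ℝ) ≤ M * t k)]
                  linarith
            have hmem : xb + t k • (v + (t k * c) • mk2 1 0) ∈ Q m := by
              apply mem_Q_of xb v (t k) c hfr htk hlin
              · have h2ac0 : 2 * xb.ofLp.1 * c0 = ‖v.ofLp.2‖ ^ 2 - v.ofLp.1 ^ 2 := by
                  rw [hc0]
                  field_simp
                have h5 : |c * v.ofLp.1| ≤ (|c0| + 1) * (|v.ofLp.1| + 1) := by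
                  rw [abs_mul]
                  exact mul_le_mul hcabs (by linarith [le_abs_self v.ofLp.1, abs_nonneg v.ofLp.1])
                    (abs_nonneg _) (by positivity)
                have haM : xb.ofLp.1 * M = (|c0| + 1) * (|v.ofLp.1| + 1) + xb.ofLp.1 := by
                  rw [hM]
                  field_simp
                have key : 0 ≤ 2 * xb.ofLp.1 * M + 2 * c * v.ofLp.1 + c ^ 2 * t k := by
                  nlinarith [neg_abs_le (c * v.ofLp.1), mul_nonneg (sq_nonneg c) htk.le]
                nlinarith [mul_nonneg htk.le key]
              · have heq1 : xb.ofLp.1 / (4 * (|v.ofLp.1| + 1)) * (|v.ofLp.1| + 1) = xb.ofLp.1 / 4 := by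
                  field_simp
                have hb1 : t k * (|v.ofLp.1| + 1) ≤ xb.ofLp.1 / 4 := by
                  have h6 := mul_le_mul_of_nonneg_right ht2
                    (by positivity : (0:ℝ) ≤ |v.ofLp.1| + 1)
                  rw [heq1] at h6
                  linarith
                have htk1 : t k ≤ 1 := le_trans ht1 ((div_le_one hM0).2 hM1)
                have heq2 : xb.ofLp.1 / (4 * (|c0| + 1)) * (|c0| + 1) = xb.ofLp.1 / 4 := by
                  field_simp
                have hb2 : |c| * t k ^ 2 ≤ xb.ofLp.1 / 4 := by
                  calc |c| * t k ^ 2 ≤ (|c0| + 1) * (t k * t k) := by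
                        nlinarith [abs_nonneg c, htk.le]
                  _ ≤ (|c0| + 1) * (t k * 1) := by
                        have : (0:ℝ) ≤ (|c0| + 1) * t k := by positivity
                        nlinarith [htk1]
                  _ ≤ xb.ofLp.1 / 4 := by nlinarith [ht3, heq2]
                nlinarith [mul_le_mul_of_nonneg_left (neg_abs_le v.ofLp.1) htk.le,
                  mul_le_mul_of_nonneg_left (neg_abs_le c) (sq_nonneg (t k)),
                  abs_nonneg v.ofLp.1, hb1, hb2]
            rw [sodq_of_mem htk hxb hmem]
            refine EReal.coe_le_coe_iff.2 ?_
            have hie : ⟪yb, v + (t k * c) • mk2 1 0⟫ = t k * c * yb.ofLp.1 := by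
              rw [inner_add_right, hperp, inner_smul_right, inner_e, zero_add]
            rw [hie]
            have hcalc : -2 / t k * (t k * c * yb.ofLp.1) = 2 * -yb.ofLp.1 * c := by
              field_simp
            rw [hcalc]
            have hsplit : 2 * -yb.ofLp.1 * c = 2 * -yb.ofLp.1 * c0 + 2 * -yb.ofLp.1 * M * t k := by
              rw [hc]
              ring
            linarith [hsplit]
        · exact ⟨fun _ => v, tendsto_const_nhds, by rw [hd v, if_neg hvK]; exact le_top⟩
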